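/- Let a ∈ ℝ^{md}, γ ∈ (0,1), ε > 0, and let μ be a Borel probability measure on Σ. Then for μ-a.e. x ∈ Σ there exists n(x) ∈ ℕ such that for all n ≥ n(x) and all integers ℓ ≥ 0, π^a_*μ( B(π^a(x), γ^n) ) ≥ γ^{nε} · μ([x|ℓ]) · Z_{x|ℓ}(γ^n), where B(z,r) is the closed ball of radius r about z in ℝ^d. -/

import Mathlib

open MeasureTheory Filter Topology Metric
open scoped ENNReal NNReal

noncomputable section

namespace SelfAffineProj

/-- The word product `T_{x|n} = T_{x_1} ⋯ T_{x_n}`. -/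
def wordProd {m d : ℕ} (T : Fin m → Matrix (Fin d) (Fin d) ℝ) (x : ℕ → Fin m) (n : ℕ) :
    Matrix (Fin d) (Fin d) ℝ :=
  ((List.range n).map fun k => T (x k)).prod

/-- The cylinder `[x|n]` of sequences agreeing with `x` on the first `n` coordinates. -/
def cylinder {m : ℕ} (x : ℕ → Fin m) (n : ℕ) : Set (ℕ → Fin m) :=
  { y | ∀ k < n, y k = x k }

/-- `sval M k` is the `(k+1)`-th largest singular value `α_{k+1}(M)` of `M`. -/
def sval {d : ℕ} (M : Matrix (Fin d) (Fin d) ℝ) (k : Fin d) : ℝ :=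
  Real.sqrt
    ((Matrix.isHermitian_iff_isSymm.mpr (Matrix.isSymm_transpose_mul_self M)).eigenvalues
      (Tuple.sort (Matrix.isHermitian_iff_isSymm.mpr (Matrix.isSymm_transpose_mul_self M)).eigenvalues k.rev))

/-- `svalN M i` is `α_{i+1}(M)` for `i < d`, junk value `0` otherwise. -/
def svalN {d : ℕ} (M : Matrix (Fin d) (Fin d) ℝ) (i : ℕ) : ℝ :=
  if h : i < d then sval M ⟨i, h⟩ else 0

/-- The singular value function `φ^s`. -/
def phi {d : ℕ} (s : ℝ) (M : Matrix (Fin d) (Fin d) ℝ) : ℝ :=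
  if s < (d : ℝ) then
    (∏ i ∈ Finset.range ⌊s⌋₊, svalN M i) * svalN M ⌊s⌋₊ ^ (s - (⌊s⌋₊ : ℝ))
  else |M.det| ^ (s / (d : ℝ))

/-- The singular value function extended to `s ∈ [0,∞]`, with `φ^∞ = 0`. -/
def phiE {d : ℕ} (s : ℝ≥0∞) (M : Matrix (Fin d) (Fin d) ℝ) : ℝ≥0∞ :=
  if s = ⊤ then 0 else ENNReal.ofReal (phi s.toReal M)

/-- The continuous linear map on Euclidean space induced by a matrix. -/
def mCLM {d : ℕ} (M : Matrix (Fin d) (Fin d) ℝ) :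
    EuclideanSpace ℝ (Fin d) →L[ℝ] EuclideanSpace ℝ (Fin d) :=
  Matrix.toEuclideanCLM (𝕜 := ℝ) M

/-- `seqComp F n = F 0 ∘ F 1 ∘ ⋯ ∘ F (n-1)`. -/
def seqComp {E : Type*} (F : ℕ → E → E) : ℕ → E → E
  | 0 => id
  | n + 1 => F 0 ∘ seqComp (fun k => F (k + 1)) n

/-- The coding map `π^a(x) = lim_n f^a_{x_1} ∘ ⋯ ∘ f^a_{x_n}(0)`. -/
def codingMap {m d : ℕ} (T : Fin m → Matrix (Fin d) (Fin d) ℝ)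
    (a : Fin m → EuclideanSpace ℝ (Fin d)) (x : ℕ → Fin m) : EuclideanSpace ℝ (Fin d) :=
  limUnder atTop fun n => seqComp (fun k y => mCLM (T (x k)) y + a (x k)) n 0

/-- `Z_M(r) = ∏_{k=1}^d min{r, α_k(M)}/α_k(M)`. -/
def Zmat {d : ℕ} (M : Matrix (Fin d) (Fin d) ℝ) (r : ℝ) : ℝ :=
  ∏ k : Fin d, min r (sval M k) / sval M k

/-- `Z_{x|n}(r)`. -/
def Zword {m d : ℕ} (T : Fin m → Matrix (Fin d) (Fin d) ℝ) (x : ℕ → Fin m) (n : ℕ)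
    (r : ℝ) : ℝ :=
  Zmat (wordProd T x n) r

/-- The length `|x ∧ y|` of the longest common initial segment of `x` and `y`. -/
def firstDiff {m : ℕ} (x y : ℕ → Fin m) : ℕ :=
  sInf { n | x n ≠ y n }

/-- `Z_{x ∧ y}(r)`, with the convention `Z_{x ∧ y}(r) = 1` for `x = y`. -/
def Zwedge {m d : ℕ} (T : Fin m → Matrix (Fin d) (Fin d) ℝ) (x y : ℕ → Fin m) (r : ℝ) : ℝ :=
  letI := Classical.dec (x = y)
  if x = y then 1 else Zword T x (firstDiff x y) r

/-- `G_μ(x,r) = ∫ Z_{x∧y}(r) dμ(y)`. -/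
def Gfun {m d : ℕ} (T : Fin m → Matrix (Fin d) (Fin d) ℝ) (μ : Measure (ℕ → Fin m))
    (x : ℕ → Fin m) (r : ℝ) : ℝ :=
  ∫ y, Zwedge T x y r ∂μ

/-- `D(μ,x) = limsup_{r→0} log G_μ(x,r)/log r`. -/
def Dfun {m d : ℕ} (T : Fin m → Matrix (Fin d) (Fin d) ℝ) (μ : Measure (ℕ → Fin m))
    (x : ℕ → Fin m) : ℝ≥0∞ :=
  limsup (fun r : ℝ => ENNReal.ofReal (Real.log (Gfun T μ x r) / Real.log r)) (𝓝[>] 0)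

/-- Lower local dimension of a measure on `ℝ^d` at a point. -/
def lowerLocalDim {d : ℕ} (η : Measure (EuclideanSpace ℝ (Fin d)))
    (z : EuclideanSpace ℝ (Fin d)) : ℝ≥0∞ :=
  liminf (fun r : ℝ => ENNReal.ofReal (Real.log (η (closedBall z r)).toReal / Real.log r))
    (𝓝[>] 0)

/-- Upper local dimension of a measure on `ℝ^d` at a point. -/
def upperLocalDim {d : ℕ} (η : Measure (EuclideanSpace ℝ (Fin d)))
    (z : EuclideanSpace ℝ (Fin d)) : ℝ≥0∞ :=
  limsup (fun r : ℝ => ENNReal.ofReal (Real.log (η (closedBall z r)).toReal / Real.log r))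
    (𝓝[>] 0)

/-- Lower Hausdorff dimension of a measure. -/
def lowerHausdorffDim {d : ℕ} (η : Measure (EuclideanSpace ℝ (Fin d))) : ℝ≥0∞ :=
  essInf (lowerLocalDim η) η

/-- Upper Hausdorff dimension of a measure. -/
def upperHausdorffDim {d : ℕ} (η : Measure (EuclideanSpace ℝ (Fin d))) : ℝ≥0∞ :=
  essSup (lowerLocalDim η) η

/-- Lower packing dimension of a measure. -/
def lowerPackingDim {d : ℕ} (η : Measure (EuclideanSpace ℝ (Fin d))) : ℝ≥0∞ :=
  essInf (upperLocalDim η) η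

/-- Upper packing dimension of a measure. -/
def upperPackingDim {d : ℕ} (η : Measure (EuclideanSpace ℝ (Fin d))) : ℝ≥0∞ :=
  essSup (upperLocalDim η) η

/-- A measure is exact dimensional if its local dimension exists a.e. and is a.e. constant. -/
def exactDimensional {d : ℕ} (η : Measure (EuclideanSpace ℝ (Fin d))) : Prop :=
  ∃ C : ℝ≥0∞, ∀ᵐ z ∂η, lowerLocalDim η z = C ∧ upperLocalDim η z = C

/-- Cylinder of a finite word given as a list. -/
def cylL {m : ℕ} (I : List (Fin m)) : Set (ℕ → Fin m) :=
  { y | ∀ (k : ℕ) (hk : k < I.length), y k = I.get ⟨k, hk⟩ }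

/-- Word product for a word given as a list. -/
def wordProdL {m d : ℕ} (T : Fin m → Matrix (Fin d) (Fin d) ℝ) (I : List (Fin m)) :
    Matrix (Fin d) (Fin d) ℝ :=
  (I.map T).prod

/-- `M^s_n(E)`: the Falconer net pre-measure at level `n`. -/
def netMeasureAux {m d : ℕ} (T : Fin m → Matrix (Fin d) (Fin d) ℝ) (s : ℝ)
    (E : Set (ℕ → Fin m)) (n : ℕ) : ℝ≥0∞ :=
  ⨅ (C : Set (List (Fin m))) (_ : ∀ I ∈ C, n ≤ I.length) (_ : E ⊆ ⋃ I ∈ C, cylL I),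
    ∑' I : C, ENNReal.ofReal (phi s (wordProdL T (I : List (Fin m))))

/-- `M^s(E) = lim_n M^s_n(E)`. -/
def netMeasure {m d : ℕ} (T : Fin m → Matrix (Fin d) (Fin d) ℝ) (s : ℝ)
    (E : Set (ℕ → Fin m)) : ℝ≥0∞ :=
  ⨆ n, netMeasureAux T s E n

/-- `dim_M E`. -/
def dimM {m d : ℕ} (T : Fin m → Matrix (Fin d) (Fin d) ℝ) (E : Set (ℕ → Fin m)) : ℝ :=
  sInf { s : ℝ | 0 ≤ s ∧ netMeasure T s E < ⊤ }

/-- The energy `∬ Z_{x∧y}(r) dμ(x) dμ(y)`. -/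
def energy {m d : ℕ} (T : Fin m → Matrix (Fin d) (Fin d) ℝ) (μ : Measure (ℕ → Fin m))
    (r : ℝ) : ℝ :=
  ∫ x, ∫ y, Zwedge T x y r ∂μ ∂μ

/-- The `r`-capacity `C_r(E)` of a set `E ⊆ Σ`. -/
def capFn {m d : ℕ} (T : Fin m → Matrix (Fin d) (Fin d) ℝ) (E : Set (ℕ → Fin m)) (r : ℝ) : ℝ :=
  (sInf { v : ℝ | ∃ μ : Measure (ℕ → Fin m),
      IsProbabilityMeasure μ ∧ μ Eᶜ = 0 ∧ v = energy T μ r })⁻¹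

/-- Lower capacity dimension. -/
def lowerCapDim {m d : ℕ} (T : Fin m → Matrix (Fin d) (Fin d) ℝ)
    (E : Set (ℕ → Fin m)) : ℝ≥0∞ :=
  liminf (fun r : ℝ => ENNReal.ofReal (Real.log (capFn T E r) / (-Real.log r))) (𝓝[>] 0)

/-- Upper capacity dimension. -/
def upperCapDim {m d : ℕ} (T : Fin m → Matrix (Fin d) (Fin d) ℝ)
    (E : Set (ℕ → Fin m)) : ℝ≥0∞ :=
  limsup (fun r : ℝ => ENNReal.ofReal (Real.log (capFn T E r) / (-Real.log r))) (𝓝[>] 0)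

/-- `N_r(F)`: the minimal number of sets of diameter at most `r` needed to cover `F`. -/
def coverNum {d : ℕ} (F : Set (EuclideanSpace ℝ (Fin d))) (r : ℝ) : ℝ≥0∞ :=
  ⨅ (C : Finset (Set (EuclideanSpace ℝ (Fin d)))) (_ : F ⊆ ⋃ s ∈ C, s)
    (_ : ∀ s ∈ C, Metric.diam s ≤ r), (C.card : ℝ≥0∞)

/-- Lower box-counting dimension. -/
def lowerBoxDim {d : ℕ} (F : Set (EuclideanSpace ℝ (Fin d))) : ℝ≥0∞ :=
  liminf (fun r : ℝ => ENNReal.ofReal (Real.log (coverNum F r).toReal / (-Real.log r))) (𝓝[>] 0)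

/-- Upper box-counting dimension. -/
def upperBoxDim {d : ℕ} (F : Set (EuclideanSpace ℝ (Fin d))) : ℝ≥0∞ :=
  limsup (fun r : ℝ => ENNReal.ofReal (Real.log (coverNum F r).toReal / (-Real.log r))) (𝓝[>] 0)

section Aux

variable {m d : ℕ}

lemma seqComp_succ_right {E : Type*} (F : ℕ → E → E) (n : ℕ) :
    seqComp F (n + 1) = seqComp F n ∘ F n := by
  induction n generalizing F with
  | zero => rfl
  | succ n ih =>
    show F 0 ∘ seqComp (fun k => F (k + 1)) (n + 1) = _
    rw [ih]
    rfl

lemma seqComp_congr {E : Type*} {F F' : ℕ → E → E} (n : ℕ) (h : ∀ k < n, F k = F' k) :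
    seqComp F n = seqComp F' n := by
  induction n generalizing F F' with
  | zero => rfl
  | succ n ih =>
    show F 0 ∘ _ = F' 0 ∘ _
    rw [h 0 (Nat.succ_pos n), ih fun k hk => h (k + 1) (by omega)]

lemma seqComp_add {E : Type*} (F : ℕ → E → E) (p n : ℕ) :
    seqComp F (p + n) = seqComp F p ∘ seqComp (fun k => F (k + p)) n := by
  induction n with
  | zero => rfl
  | succ n ih =>
    have : p + (n + 1) = (p + n) + 1 := rfl
    rw [this, seqComp_succ_right, ih, seqComp_succ_right]
    ext y
    simp [Function.comp, Nat.add_comm p n]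

variable (T : Fin m → Matrix (Fin d) (Fin d) ℝ) (a : Fin m → EuclideanSpace ℝ (Fin d))

/-- The step functions. -/
def stepF (x : ℕ → Fin m) : ℕ → EuclideanSpace ℝ (Fin d) → EuclideanSpace ℝ (Fin d) :=
  fun k y => mCLM (T (x k)) y + a (x k)

/-- The partial coding maps. -/
def pMap (x : ℕ → Fin m) (n : ℕ) : EuclideanSpace ℝ (Fin d) :=
  seqComp (stepF T a x) n 0

lemma wordProd_succ (x : ℕ → Fin m) (n : ℕ) :
    wordProd T x (n + 1) = wordProd T x n * T (x n) := by
  unfold wordProd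
  rw [List.range_succ, List.map_append, List.prod_append]
  simp

lemma mCLM_mul (M N : Matrix (Fin d) (Fin d) ℝ) : mCLM (M * N) = mCLM M * mCLM N :=
  map_mul _ _ _

lemma mCLM_one : mCLM (1 : Matrix (Fin d) (Fin d) ℝ) = 1 := map_one _

lemma seqComp_stepF_apply (x : ℕ → Fin m) (n : ℕ) (y : EuclideanSpace ℝ (Fin d)) :
    seqComp (stepF T a x) n y = mCLM (wordProd T x n) y + pMap T a x n := by
  induction n generalizing y with
  | zero =>
    show y = mCLM 1 y + pMap T a x 0
    simp [mCLM_one, pMap, seqComp]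
  | succ n ih =>
    have h1 : seqComp (stepF T a x) (n + 1) y
        = seqComp (stepF T a x) n (stepF T a x n y) := by
      rw [seqComp_succ_right]; rfl
    have h2 : pMap T a x (n + 1) = seqComp (stepF T a x) n (stepF T a x n 0) := by
      unfold pMap; rw [seqComp_succ_right]; rfl
    rw [h1, ih, h2, ih]
    show mCLM (wordProd T x n) (mCLM (T (x n)) y + a (x n)) + _
      = mCLM (wordProd T x (n + 1)) y + (mCLM (wordProd T x n) (mCLM (T (x n)) 0 + a (x n)) + _)
    rw [wordProd_succ, mCLM_mul]
    simp only [map_add, map_zero, zero_add, ContinuousLinearMap.mul_apply]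
    abel

lemma pMap_succ (x : ℕ → Fin m) (n : ℕ) :
    pMap T a x (n + 1) = mCLM (wordProd T x n) (a (x n)) + pMap T a x n := by
  have h2 : pMap T a x (n + 1) = seqComp (stepF T a x) n (stepF T a x n 0) := by
    unfold pMap; rw [seqComp_succ_right]; rfl
  rw [h2, seqComp_stepF_apply]
  show mCLM _ (mCLM (T (x n)) 0 + a (x n)) + _ = _
  simp

end Aux
section Conv

variable {m d : ℕ} (T : Fin m → Matrix (Fin d) (Fin d) ℝ)
  (a : Fin m → EuclideanSpace ℝ (Fin d)) {c A : ℝ}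

lemma norm_mCLM_wordProd_le (hc0 : 0 ≤ c) (hc : ∀ i, ‖mCLM (T i)‖ ≤ c)
    (x : ℕ → Fin m) (n : ℕ) : ‖mCLM (wordProd T x n)‖ ≤ c ^ n := by
  induction n with
  | zero =>
    rw [show wordProd T x 0 = 1 from rfl, mCLM_one, pow_zero, ContinuousLinearMap.one_def]
    exact ContinuousLinearMap.norm_id_le
  | succ n ih =>
    rw [wordProd_succ, mCLM_mul, pow_succ]
    have hcomp : (mCLM (wordProd T x n) * mCLM (T (x n)) :
        EuclideanSpace ℝ (Fin d) →L[ℝ] EuclideanSpace ℝ (Fin d))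
        = (mCLM (wordProd T x n)).comp (mCLM (T (x n))) := rfl
    rw [hcomp]
    exact (ContinuousLinearMap.opNorm_comp_le _ _).trans
      (mul_le_mul ih (hc _) (norm_nonneg _) (pow_nonneg hc0 n))

lemma norm_pMap_le (hc0 : 0 ≤ c) (hc1 : c < 1) (hc : ∀ i, ‖mCLM (T i)‖ ≤ c)
    (hA : ∀ i, ‖a i‖ ≤ A) (x : ℕ → Fin m) (n : ℕ) :
    ‖pMap T a x n‖ ≤ A * (1 - c)⁻¹ := by
  have hA0 : 0 ≤ A := le_trans (norm_nonneg _) (hA (x 0))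
  have key : ‖pMap T a x n‖ ≤ ∑ k ∈ Finset.range n, A * c ^ k := by
    induction n with
    | zero => simp [pMap, seqComp]
    | succ n ih =>
      rw [pMap_succ, Finset.sum_range_succ]
      refine (norm_add_le _ _).trans ?_
      have := ((mCLM (wordProd T x n)).le_opNorm (a (x n))).trans
        (mul_le_mul (norm_mCLM_wordProd_le T hc0 hc x n) (hA _) (norm_nonneg _)
          (pow_nonneg hc0 n))
      rw [add_comm (∑ k ∈ Finset.range n, A * c ^ k)]
      exact add_le_add (by linarith [this]) ih
  refine key.trans ?_
  calc ∑ k ∈ Finset.range n, A * c ^ k = A * ∑ k ∈ Finset.range n, c ^ k := by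
        rw [Finset.mul_sum]
    _ ≤ A * (1 - c)⁻¹ := by
        refine mul_le_mul_of_nonneg_left ?_ hA0
        refine (Summable.sum_le_tsum (Finset.range n) (fun k _ => pow_nonneg hc0 k)
          (summable_geometric_of_lt_one hc0 hc1)).trans ?_
        rw [tsum_geometric_of_lt_one hc0 hc1]

lemma pMap_tendsto_codingMap (hc0 : 0 ≤ c) (hc1 : c < 1) (hc : ∀ i, ‖mCLM (T i)‖ ≤ c)
    (hA : ∀ i, ‖a i‖ ≤ A) (x : ℕ → Fin m) :
    Filter.Tendsto (pMap T a x) atTop (𝓝 (codingMap T a x)) := by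
  have hcauchy : CauchySeq (pMap T a x) := by
    refine cauchySeq_of_le_geometric c A hc1 fun n => ?_
    rw [dist_eq_norm, pMap_succ, norm_sub_rev, add_sub_cancel_right]
    have h1 := (mCLM (wordProd T x n)).le_opNorm (a (x n))
    have h2 := norm_mCLM_wordProd_le T hc0 hc x n
    have h3 := hA (x n)
    have h4 : (0:ℝ) ≤ A := le_trans (norm_nonneg _) (hA (x 0))
    nlinarith [norm_nonneg (a (x n)), norm_nonneg (mCLM (wordProd T x n)), pow_nonneg hc0 n]
  obtain ⟨l, hl⟩ := cauchySeq_tendsto_of_complete hcauchy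
  have heq : codingMap T a x = l := hl.limUnder_eq
  rw [heq]
  exact hl

lemma norm_codingMap_le (hc0 : 0 ≤ c) (hc1 : c < 1) (hc : ∀ i, ‖mCLM (T i)‖ ≤ c)
    (hA : ∀ i, ‖a i‖ ≤ A) (x : ℕ → Fin m) :
    ‖codingMap T a x‖ ≤ A * (1 - c)⁻¹ :=
  le_of_tendsto' (pMap_tendsto_codingMap T a hc0 hc1 hc hA x).norm
    fun n => norm_pMap_le T a hc0 hc1 hc hA x n

lemma codingMap_shift (hc0 : 0 ≤ c) (hc1 : c < 1) (hc : ∀ i, ‖mCLM (T i)‖ ≤ c)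
    (hA : ∀ i, ‖a i‖ ≤ A) (x : ℕ → Fin m) (ℓ : ℕ) :
    codingMap T a x
      = mCLM (wordProd T x ℓ) (codingMap T a (fun k => x (k + ℓ))) + pMap T a x ℓ := by
  have hkey : ∀ n, pMap T a x (ℓ + n)
      = mCLM (wordProd T x ℓ) (pMap T a (fun k => x (k + ℓ)) n) + pMap T a x ℓ := by
    intro n
    have h1 : pMap T a x (ℓ + n)
        = seqComp (stepF T a x) ℓ (seqComp (fun k => stepF T a x (k + ℓ)) n 0) := by
      unfold pMap; rw [seqComp_add]; rfl
    have h2 : (fun k => stepF T a x (k + ℓ)) = stepF T a (fun k => x (k + ℓ)) := rfl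
    rw [h1, h2, seqComp_stepF_apply]
    rfl
  have hmono : Filter.Tendsto (fun n => ℓ + n) atTop atTop :=
    Filter.tendsto_atTop_mono (fun n => Nat.le_add_left n ℓ) Filter.tendsto_id
  have t1 : Filter.Tendsto (fun n => pMap T a x (ℓ + n)) atTop (𝓝 (codingMap T a x)) :=
    (pMap_tendsto_codingMap T a hc0 hc1 hc hA x).comp hmono
  have t1' : Filter.Tendsto (fun n => pMap T a x (ℓ + n)) atTop
      (𝓝 (mCLM (wordProd T x ℓ) (codingMap T a (fun k => x (k + ℓ))) + pMap T a x ℓ)) := by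
    simp_rw [hkey]
    exact (((mCLM (wordProd T x ℓ)).continuous.tendsto _).comp
      (pMap_tendsto_codingMap T a hc0 hc1 hc hA _)).add tendsto_const_nhds
  exact tendsto_nhds_unique t1 t1'

lemma wordProd_congr {x y : ℕ → Fin m} {ℓ : ℕ} (h : ∀ k < ℓ, y k = x k) :
    wordProd T y ℓ = wordProd T x ℓ := by
  unfold wordProd
  congr 1
  exact List.map_congr_left fun k hk => by rw [h k (List.mem_range.mp hk)]

lemma pMap_congr {x y : ℕ → Fin m} {ℓ : ℕ} (h : ∀ k < ℓ, y k = x k) :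
    pMap T a y ℓ = pMap T a x ℓ := by
  unfold pMap
  rw [seqComp_congr ℓ (fun k hk => by unfold stepF; rw [h k hk])]
  rfl

lemma isUnit_wordProd (hTinv : ∀ i, IsUnit (T i)) (x : ℕ → Fin m) (ℓ : ℕ) :
    IsUnit (wordProd T x ℓ) := by
  induction ℓ with
  | zero => simp [wordProd]
  | succ n ih => rw [wordProd_succ]; exact ih.mul (hTinv _)

end Conv
section Meas

variable {m d : ℕ} (T : Fin m → Matrix (Fin d) (Fin d) ℝ)
  (a : Fin m → EuclideanSpace ℝ (Fin d)) {c A : ℝ}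

lemma measurable_of_depends_on (hm : 1 ≤ m) {α : Type*} [MeasurableSpace α]
    (f : (ℕ → Fin m) → α) (n : ℕ) (hf : ∀ x y : ℕ → Fin m, (∀ k < n, y k = x k) → f y = f x) :
    Measurable f := by
  have i0 : Fin m := ⟨0, hm⟩
  set g : (Fin n → Fin m) → α :=
    fun v => f (fun k => if h : k < n then v ⟨k, h⟩ else i0) with hg
  have hfg : f = g ∘ (fun x (k : Fin n) => x k) := by
    funext x
    exact (hf x _ (fun k hk => by simp [hk])).symm
  rw [hfg]
  exact (measurable_of_countable g).comp
    (measurable_pi_lambda _ fun k => measurable_pi_apply _)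

lemma measurable_pMap (hm : 1 ≤ m) (n : ℕ) : Measurable (fun x => pMap T a x n) :=
  measurable_of_depends_on hm _ n fun x y h => pMap_congr T a h

lemma measurable_codingMap (hm : 1 ≤ m) (hc0 : 0 ≤ c) (hc1 : c < 1)
    (hc : ∀ i, ‖mCLM (T i)‖ ≤ c) (hA : ∀ i, ‖a i‖ ≤ A) :
    Measurable (codingMap T a) := by
  refine measurable_of_tendsto_metrizable' atTop (measurable_pMap T a hm) ?_
  rw [tendsto_pi_nhds]
  exact fun x => pMap_tendsto_codingMap T a hc0 hc1 hc hA x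

end Meas
section Sval

open Matrix

variable {d : ℕ}

lemma eig_pos {M : Matrix (Fin d) (Fin d) ℝ} (hM : IsUnit M) (j : Fin d) :
    0 < ((Matrix.isHermitian_iff_isSymm.mpr (Matrix.isSymm_transpose_mul_self M))).eigenvalues j := by
  have h0 : 0 ≤ ((Matrix.isHermitian_iff_isSymm.mpr (Matrix.isSymm_transpose_mul_self M))).eigenvalues j :=
    Matrix.eigenvalues_conjTranspose_mul_self_nonneg M j
  have hdetM : M.det ≠ 0 := ((Matrix.isUnit_iff_isUnit_det M).mp hM).ne_zero
  have hdet : (Mᵀ * M).det ≠ 0 := by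
    rw [Matrix.det_mul, Matrix.det_transpose]
    simpa using mul_ne_zero hdetM hdetM
  rw [((Matrix.isHermitian_iff_isSymm.mpr (Matrix.isSymm_transpose_mul_self M))).det_eq_prod_eigenvalues] at hdet
  have := Finset.prod_ne_zero_iff.mp hdet j (Finset.mem_univ j)
  exact lt_of_le_of_ne h0 (by simpa using (Ne.symm this))

lemma sval_pos {M : Matrix (Fin d) (Fin d) ℝ} (hM : IsUnit M) (k : Fin d) :
    0 < sval M k :=
  Real.sqrt_pos.mpr (eig_pos hM _)

lemma prod_sval_eq {M : Matrix (Fin d) (Fin d) ℝ} (f : ℝ → ℝ) :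
    ∏ k, f (sval M k)
      = ∏ j, f (Real.sqrt (((Matrix.isHermitian_iff_isSymm.mpr (Matrix.isSymm_transpose_mul_self M))).eigenvalues j)) := by
  have := Equiv.prod_comp
    (Fin.revPerm.trans (Tuple.sort ((Matrix.isHermitian_iff_isSymm.mpr (Matrix.isSymm_transpose_mul_self M))).eigenvalues))
    (fun j => f (Real.sqrt (((Matrix.isHermitian_iff_isSymm.mpr (Matrix.isSymm_transpose_mul_self M))).eigenvalues j)))
  simpa [sval] using this

lemma norm_mCLM_eigen (M : Matrix (Fin d) (Fin d) ℝ) (j : Fin d) :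
    ‖mCLM M (((Matrix.isHermitian_iff_isSymm.mpr (Matrix.isSymm_transpose_mul_self M))).eigenvectorBasis j)‖
      = Real.sqrt (((Matrix.isHermitian_iff_isSymm.mpr (Matrix.isSymm_transpose_mul_self M))).eigenvalues j) := by
  set hH := (Matrix.isHermitian_iff_isSymm.mpr (Matrix.isSymm_transpose_mul_self M)) with hHdef
  set u : Fin d → ℝ := ⇑(hH.eigenvectorBasis j) with hu
  have hcoe : ∀ i, (mCLM M (hH.eigenvectorBasis j)) i = (M *ᵥ u) i := fun i => rfl
  have hnorm1 : ‖hH.eigenvectorBasis j‖ = 1 := hH.eigenvectorBasis.orthonormal.1 j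
  have huu : u ⬝ᵥ u = 1 := by
    have := congrArg (fun z : ℝ => z ^ 2) hnorm1
    rw [EuclideanSpace.norm_eq] at this
    simp only [one_pow] at this
    rw [Real.sq_sqrt (by positivity)] at this
    simpa [dotProduct, pow_two] using this
  have h1 : u ⬝ᵥ ((Mᴴ * M) *ᵥ u) = (M *ᵥ u) ⬝ᵥ (M *ᵥ u) := by
    rw [Matrix.conjTranspose_eq_transpose_of_trivial, ← Matrix.mulVec_mulVec,
      Matrix.dotProduct_mulVec, Matrix.vecMul_transpose]
  have h2 : (Mᴴ * M) *ᵥ u = hH.eigenvalues j • u := hH.mulVec_eigenvectorBasis j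
  have h3 : (M *ᵥ u) ⬝ᵥ (M *ᵥ u) = hH.eigenvalues j := by
    rw [← h1, h2, dotProduct_smul, huu, smul_eq_mul, mul_one]
  rw [EuclideanSpace.norm_eq]
  congr 1
  calc ∑ i, ‖(mCLM M (hH.eigenvectorBasis j)) i‖ ^ 2
      = ∑ i, (M *ᵥ u) i * (M *ᵥ u) i := by
        refine Finset.sum_congr rfl fun i _ => ?_
        rw [hcoe i, Real.norm_eq_abs, sq_abs, pow_two]
    _ = (M *ᵥ u) ⬝ᵥ (M *ᵥ u) := rfl
    _ = hH.eigenvalues j := h3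

lemma Zmat_eq (M : Matrix (Fin d) (Fin d) ℝ) (r : ℝ) :
    Zmat M r = ∏ j, min r (Real.sqrt (((Matrix.isHermitian_iff_isSymm.mpr (Matrix.isSymm_transpose_mul_self M))).eigenvalues j))
      / Real.sqrt (((Matrix.isHermitian_iff_isSymm.mpr (Matrix.isSymm_transpose_mul_self M))).eigenvalues j) :=
  prod_sval_eq (fun z => min r z / z)

lemma Zmat_nonneg {M : Matrix (Fin d) (Fin d) ℝ} (hM : IsUnit M) {r : ℝ} (hr : 0 ≤ r) :
    0 ≤ Zmat M r :=
  Finset.prod_nonneg fun k _ => div_nonneg (le_min hr (sval_pos hM k).le) (sval_pos hM k).le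

lemma Zmat_le_one {M : Matrix (Fin d) (Fin d) ℝ} (hM : IsUnit M) {r : ℝ} (hr : 0 ≤ r) :
    Zmat M r ≤ 1 :=
  Finset.prod_le_one
    (fun k _ => div_nonneg (le_min hr (sval_pos hM k).le) (sval_pos hM k).le)
    (fun k _ => div_le_one_of_le₀ (min_le_right _ _) (sval_pos hM k).le)

lemma Zmat_le_two_pow {M : Matrix (Fin d) (Fin d) ℝ} (hM : IsUnit M) {r : ℝ} (hr : 0 ≤ r) :
    Zmat M r ≤ 2 ^ d * Zmat M (r / 2) := by
  unfold Zmat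
  have key : ∀ k : Fin d, min r (sval M k) / sval M k
      ≤ 2 * (min (r / 2) (sval M k) / sval M k) := by
    intro k
    have hα := sval_pos hM k
    have hmin : min r (sval M k) ≤ 2 * min (r / 2) (sval M k) := by
      rcases le_total (r / 2) (sval M k) with h | h
      · rw [min_eq_left h]; linarith [min_le_left r (sval M k)]
      · rw [min_eq_right h]; linarith [min_le_right r (sval M k), hα.le]
    calc min r (sval M k) / sval M k ≤ (2 * min (r / 2) (sval M k)) / sval M k :=
          (div_le_div_iff_of_pos_right hα).mpr hmin
      _ = 2 * (min (r / 2) (sval M k) / sval M k) := by ring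
  calc ∏ k, min r (sval M k) / sval M k
      ≤ ∏ k, 2 * (min (r / 2) (sval M k) / sval M k) := by
        refine Finset.prod_le_prod (fun k _ => ?_) (fun k _ => key k)
        exact div_nonneg (le_min hr (sval_pos hM k).le) (sval_pos hM k).le
    _ = 2 ^ d * ∏ k, min (r / 2) (sval M k) / sval M k := by
        rw [Finset.prod_mul_distrib, Finset.prod_const, Finset.card_univ, Fintype.card_fin]

end Sval
section Covering

open Matrix

variable {d : ℕ}

lemma covering {M : Matrix (Fin d) (Fin d) ℝ} (hM : IsUnit M) {r R : ℝ}
    (hr : 0 < r) (hR : 0 ≤ R) (hd : 0 < d) (c : EuclideanSpace ℝ (Fin d)) :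
    ∃ P : Finset (EuclideanSpace ℝ (Fin d)),
      (P.card : ℝ) * Zmat M r ≤ (2 * R * d + 1) ^ d ∧
      ∀ v : EuclideanSpace ℝ (Fin d), ‖v‖ ≤ R →
        ∃ p ∈ P, ‖c + mCLM M v - p‖ ≤ r := by
  classical
  set hH := (Matrix.isHermitian_iff_isSymm.mpr (Matrix.isSymm_transpose_mul_self M)) with hHdef
  set B := hH.eigenvectorBasis with hB
  set α : Fin d → ℝ := fun j => Real.sqrt (hH.eigenvalues j) with hαdef
  have hα : ∀ j, 0 < α j := fun j => Real.sqrt_pos.mpr (eig_pos hM j)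
  have hw : ∀ j, ‖mCLM M (B j)‖ = α j := fun j => norm_mCLM_eigen M j
  have hd' : (0 : ℝ) < d := by exact_mod_cast hd
  set s : Fin d → ℝ := fun j => r / (d * α j) with hsdef
  have hs : ∀ j, 0 < s j := fun j => div_pos hr (mul_pos hd' (hα j))
  set N : Fin d → ℕ := fun j => ⌊2 * R / s j⌋₊ + 1 with hNdef
  set pt : (Fin d → ℕ) → EuclideanSpace ℝ (Fin d) :=
    fun t => c + ∑ j, (-R + t j * s j) • mCLM M (B j) with hpt
  refine ⟨(Fintype.piFinset fun j => Finset.range (N j)).image pt, ?_, ?_⟩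
  · -- cardinality bound
    have hcard : (((Fintype.piFinset fun j => Finset.range (N j)).image pt).card : ℝ)
        ≤ ∏ j, (N j : ℝ) := by
      calc (((Fintype.piFinset fun j => Finset.range (N j)).image pt).card : ℝ)
          ≤ ((Fintype.piFinset fun j => Finset.range (N j)).card : ℝ) := by
            exact_mod_cast Finset.card_image_le
        _ = ∏ j, (N j : ℝ) := by
            rw [Fintype.card_piFinset, Nat.cast_prod]
            exact Finset.prod_congr rfl fun j _ => by rw [Finset.card_range]
    have hZ : Zmat M r = ∏ j, min r (α j) / α j := Zmat_eq M r
    have hZnn : 0 ≤ Zmat M r := Zmat_nonneg hM hr.le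
    calc ((Finset.image pt (Fintype.piFinset fun j => Finset.range (N j))).card : ℝ) * Zmat M r
        ≤ (∏ j, (N j : ℝ)) * ∏ j, min r (α j) / α j := by
          rw [← hZ]; exact mul_le_mul_of_nonneg_right hcard hZnn
      _ = ∏ j, (N j : ℝ) * (min r (α j) / α j) := by rw [← Finset.prod_mul_distrib]
      _ ≤ ∏ j, (2 * R * d + 1) := by
          refine Finset.prod_le_prod (fun j _ => ?_) (fun j _ => ?_)
          · positivity
          · have hNle : (N j : ℝ) ≤ 2 * R / s j + 1 := by
              rw [hNdef]
              push_cast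
              exact add_le_add_left (Nat.floor_le (by positivity)) 1
            have hsval : 2 * R / s j = 2 * R * d * α j / r := by
              rw [hsdef]
              field_simp
            have hβ1 : min r (α j) ≤ α j := min_le_right _ _
            have hβ2 : min r (α j) ≤ r := min_le_left _ _
            have hβ0 : 0 ≤ min r (α j) := le_min hr.le (hα j).le
            have hαj := hα j
            calc (N j : ℝ) * (min r (α j) / α j)
                ≤ (2 * R * d * α j / r + 1) * (min r (α j) / α j) := by
                  refine mul_le_mul_of_nonneg_right ?_ (by positivity)
                  rw [← hsval]; exact hNle
              _ = 2 * R * d * (min r (α j) / r) + min r (α j) / α j := by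
                  field_simp
              _ ≤ 2 * R * d * 1 + 1 := by
                  refine add_le_add (mul_le_mul_of_nonneg_left ?_ (by positivity)) ?_
                  · exact div_le_one_of_le₀ hβ2 hr.le
                  · exact div_le_one_of_le₀ hβ1 hαj.le
              _ = 2 * R * d + 1 := by ring
      _ = (2 * R * d + 1) ^ d := by
          rw [Finset.prod_const, Finset.card_univ, Fintype.card_fin]
  · -- covering property
    intro v hv
    set vc : Fin d → ℝ := fun j => B.repr v j with hvc
    have hvcR : ∀ j, |vc j| ≤ R := by
      intro j
      rw [hvc]
      simp only
      rw [B.repr_apply_apply]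
      refine (abs_real_inner_le_norm _ _).trans ?_
      rw [B.orthonormal.1 j, one_mul]
      exact hv
    set t : Fin d → ℕ := fun j => ⌊(vc j + R) / s j⌋₊ with ht
    have htmem : t ∈ Fintype.piFinset fun j => Finset.range (N j) := by
      rw [Fintype.mem_piFinset]
      intro j
      rw [Finset.mem_range, hNdef]
      have : (vc j + R) / s j ≤ 2 * R / s j :=
        (div_le_div_iff_of_pos_right (hs j)).mpr (by linarith [(abs_le.mp (hvcR j)).2])
      exact Nat.lt_succ_of_le (Nat.floor_le_floor this)
    have happrox : ∀ j, |vc j - (-R + t j * s j)| ≤ s j := by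
      intro j
      have hq0 : 0 ≤ (vc j + R) / s j :=
        div_nonneg (by linarith [(abs_le.mp (hvcR j)).1]) (hs j).le
      have hle : (t j : ℝ) * s j ≤ vc j + R := by
        have := Nat.floor_le hq0
        calc (t j : ℝ) * s j ≤ (vc j + R) / s j * s j := by
              exact mul_le_mul_of_nonneg_right this (hs j).le
          _ = vc j + R := div_mul_cancel₀ _ (hs j).ne'
      have hlt : vc j + R < ((t j : ℝ) + 1) * s j := by
        have := Nat.lt_floor_add_one ((vc j + R) / s j)
        calc vc j + R = (vc j + R) / s j * s j := (div_mul_cancel₀ _ (hs j).ne').symm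
          _ < ((t j : ℝ) + 1) * s j := by
              exact mul_lt_mul_of_pos_right (by exact_mod_cast this) (hs j)
      rw [abs_le]
      constructor <;> nlinarith [hs j]
    refine ⟨pt t, Finset.mem_image_of_mem pt htmem, ?_⟩
    have hsum : mCLM M v = ∑ j, vc j • mCLM M (B j) := by
      conv_lhs => rw [← B.sum_repr v]
      rw [map_sum]
      exact Finset.sum_congr rfl fun j _ => (mCLM M).map_smul _ _
    have hdiff : c + mCLM M v - pt t = ∑ j, (vc j - (-R + (t j : ℝ) * s j)) • mCLM M (B j) := by
      rw [hpt, hsum]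
      simp only [sub_smul]
      rw [Finset.sum_sub_distrib]
      abel
    rw [hdiff]
    refine (norm_sum_le _ _).trans ?_
    have hterm : ∀ j : Fin d, ‖(vc j - (-R + (t j : ℝ) * s j)) • mCLM M (B j)‖ ≤ r / d := by
      intro j
      rw [norm_smul, Real.norm_eq_abs, hw j]
      have h1 : |vc j - (-R + (t j : ℝ) * s j)| * α j ≤ s j * α j :=
        mul_le_mul_of_nonneg_right (happrox j) (hα j).le
      refine h1.trans ?_
      rw [hsdef]
      rw [div_mul_eq_mul_div, mul_comm (d : ℝ) (α j), ← div_div, mul_div_assoc]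
      rw [div_self (hα j).ne', mul_one]
    calc ∑ j, ‖(vc j - (-R + (t j : ℝ) * s j)) • mCLM M (B j)‖
        ≤ ∑ _j : Fin d, r / d := Finset.sum_le_sum fun j _ => hterm j
      _ = d * (r / d) := by
          rw [Finset.sum_const, Finset.card_univ, Fintype.card_fin, nsmul_eq_mul]
      _ = r := by field_simp

end Covering
section Cyl

variable {m : ℕ}

/-- Cylinder set given by a finite word of length `ℓ`. -/
def cylSet {ℓ : ℕ} (I : Fin ℓ → Fin m) : Set (ℕ → Fin m) :=
  {y | ∀ k : Fin ℓ, y k = I k}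

lemma cylSet_agree {ℓ : ℕ} {I : Fin ℓ → Fin m} {x y : ℕ → Fin m}
    (hx : x ∈ cylSet I) (hy : y ∈ cylSet I) : ∀ k < ℓ, y k = x k := fun k hk => by
  have h1 := hy ⟨k, hk⟩
  have h2 := hx ⟨k, hk⟩
  simp only at h1 h2
  rw [h1, h2]

lemma cylinder_eq_cylSet {ℓ : ℕ} {I : Fin ℓ → Fin m} {x : ℕ → Fin m}
    (hx : x ∈ cylSet I) : cylinder x ℓ = cylSet I := by
  ext y
  constructor
  · intro hy k
    have := hy k k.isLt
    rw [this]
    exact hx k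
  · intro hy k hk
    exact cylSet_agree hx hy k hk

lemma measurableSet_cylSet {ℓ : ℕ} (I : Fin ℓ → Fin m) : MeasurableSet (cylSet I) := by
  have : cylSet I = ⋂ k : Fin ℓ, (fun y : ℕ → Fin m => y k) ⁻¹' {I k} := by
    ext y; simp [cylSet]
  rw [this]
  exact MeasurableSet.iInter fun k => (measurable_pi_apply _) (measurableSet_singleton _)

lemma iUnion_cylSet (ℓ : ℕ) : (⋃ I : Fin ℓ → Fin m, cylSet I) = Set.univ := by
  ext y
  simp only [Set.mem_iUnion, Set.mem_univ, iff_true]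
  exact ⟨fun k => y k, fun k => rfl⟩

lemma sum_measure_cylSet (μ : Measure (ℕ → Fin m)) [IsProbabilityMeasure μ] (ℓ : ℕ) :
    ∑ I : Fin ℓ → Fin m, μ (cylSet I) = 1 := by
  rw [← tsum_fintype (L := .unconditional _),
    ← measure_iUnion ?_ fun I => measurableSet_cylSet I, iUnion_cylSet, measure_univ]
  intro I J hIJ
  refine Set.disjoint_left.mpr fun y hyI hyJ => hIJ ?_
  funext k
  rw [← hyI k, hyJ k]

end Cyl
theorem statement10 (m d : ℕ) (hm : 1 ≤ m) (hd : 1 ≤ d)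
    (T : Fin m → Matrix (Fin d) (Fin d) ℝ)
    (hTinv : ∀ i, IsUnit (T i))
    (hT1 : ∀ i, ‖mCLM (T i)‖ < 1)
    (a : Fin m → EuclideanSpace ℝ (Fin d))
    (γ : ℝ) (hγ : γ ∈ Set.Ioo (0 : ℝ) 1) (ε : ℝ) (hε : 0 < ε)
    (μ : Measure (ℕ → Fin m)) (hμ : IsProbabilityMeasure μ) :
    ∀ᵐ x ∂μ, ∃ N : ℕ, ∀ n ≥ N, ∀ ℓ : ℕ,
      ENNReal.ofReal (γ ^ ((n : ℝ) * ε) * Zword T x ℓ (γ ^ n)) * μ (cylinder x ℓ)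
        ≤ (μ.map (codingMap T a)) (closedBall (codingMap T a x) (γ ^ n)) := by
  classical
  have hγ0 : (0 : ℝ) < γ := hγ.1
  have hγ1 : γ < 1 := hγ.2
  have hmne : Nonempty (Fin m) := ⟨⟨0, hm⟩⟩
  -- contraction constants
  obtain ⟨c, hc_lt, hc_i, hc0⟩ : ∃ c : ℝ, c < 1 ∧ (∀ i, ‖mCLM (T i)‖ ≤ c) ∧ 0 ≤ c := by
    refine ⟨Finset.univ.sup' Finset.univ_nonempty (fun i => ‖mCLM (T i)‖), ?_, ?_, ?_⟩
    · exact (Finset.sup'_lt_iff Finset.univ_nonempty).mpr fun i _ => hT1 i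
    · exact fun i => Finset.le_sup' (fun i => ‖mCLM (T i)‖) (Finset.mem_univ i)
    · obtain ⟨i⟩ := hmne
      exact (norm_nonneg (mCLM (T i))).trans
        (Finset.le_sup' (fun i => ‖mCLM (T i)‖) (Finset.mem_univ i))
  obtain ⟨A, hA_i, hA0⟩ : ∃ A : ℝ, (∀ i, ‖a i‖ ≤ A) ∧ 0 ≤ A := by
    refine ⟨Finset.univ.sup' Finset.univ_nonempty (fun i => ‖a i‖), ?_, ?_⟩
    · exact fun i => Finset.le_sup' (fun i => ‖a i‖) (Finset.mem_univ i)
    · obtain ⟨i⟩ := hmne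
      exact (norm_nonneg (a i)).trans
        (Finset.le_sup' (fun i => ‖a i‖) (Finset.mem_univ i))
  set R : ℝ := A * (1 - c)⁻¹ with hRdef
  have hR0 : 0 ≤ R := mul_nonneg hA0 (inv_nonneg.mpr (by linarith))
  set π : (ℕ → Fin m) → EuclideanSpace ℝ (Fin d) := codingMap T a with hπdef
  have hπmeas : Measurable π := measurable_codingMap T a hm hc0 hc_lt hc_i hA_i
  have hπnorm : ∀ x, ‖π x‖ ≤ R := fun x => norm_codingMap_le T a hc0 hc_lt hc_i hA_i x
  set ν : Measure (EuclideanSpace ℝ (Fin d)) := μ.map π with hνdef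
  have hν : ∀ (z : EuclideanSpace ℝ (Fin d)) (r : ℝ),
      ν (closedBall z r) = μ (π ⁻¹' closedBall z r) :=
    fun z r => Measure.map_apply hπmeas measurableSet_closedBall
  have hWunit : ∀ (x : ℕ → Fin m) (ℓ : ℕ), IsUnit (wordProd T x ℓ) :=
    fun x ℓ => isUnit_wordProd T hTinv x ℓ
  -- distance bound within cylinders
  have hcyl_dist : ∀ (x y : ℕ → Fin m) (ℓ : ℕ), (∀ k < ℓ, y k = x k) →
      ‖π y - π x‖ ≤ c ^ ℓ * (2 * R) := by
    intro x y ℓ hy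
    have hx' := codingMap_shift T a hc0 hc_lt hc_i hA_i x ℓ
    have hy' := codingMap_shift T a hc0 hc_lt hc_i hA_i y ℓ
    have hW : wordProd T y ℓ = wordProd T x ℓ := wordProd_congr T hy
    have hp : pMap T a y ℓ = pMap T a x ℓ := pMap_congr T a hy
    have hdiff : π y - π x = mCLM (wordProd T x ℓ)
        (codingMap T a (fun k => y (k + ℓ)) - codingMap T a (fun k => x (k + ℓ))) := by
      rw [hπdef]
      rw [hy', hx', hW, hp, map_sub]
      abel
    rw [hdiff]
    refine ((mCLM _).le_opNorm _).trans ?_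
    have h1 := norm_mCLM_wordProd_le T hc0 hc_i x ℓ
    have h2 : ‖codingMap T a (fun k => y (k + ℓ)) - codingMap T a (fun k => x (k + ℓ))‖
        ≤ 2 * R := by
      refine (norm_sub_le _ _).trans ?_
      have := hπnorm (fun k => y (k + ℓ))
      have := hπnorm (fun k => x (k + ℓ))
      rw [hπdef] at *
      linarith
    exact mul_le_mul h1 h2 (norm_nonneg _) (pow_nonneg hc0 ℓ)
  -- cut-off constants
  obtain ⟨B0, hB0⟩ : ∃ k : ℕ, 2 * R * c ^ k ≤ 1 := by
    have h := (tendsto_pow_atTop_nhds_zero_of_lt_one hc0 hc_lt).const_mul (2 * R)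
    rw [mul_zero] at h
    exact (h.eventually_lt_const one_pos).exists.imp fun k hk => hk.le
  obtain ⟨B1, hB1⟩ : ∃ k : ℕ, c ^ k ≤ γ :=
    ((tendsto_pow_atTop_nhds_zero_of_lt_one hc0 hc_lt).eventually_lt_const hγ0).exists.imp
      fun k hk => hk.le
  set L : ℕ → ℕ := fun n => B0 + B1 * n with hLdef
  have hL : ∀ n, 2 * R * c ^ L n ≤ γ ^ n := by
    intro n
    have : c ^ L n = c ^ B0 * (c ^ B1) ^ n := by
      rw [hLdef]; simp only [pow_add, pow_mul]
    rw [this]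
    calc 2 * R * (c ^ B0 * (c ^ B1) ^ n) = 2 * R * c ^ B0 * (c ^ B1) ^ n := by ring
      _ ≤ 1 * γ ^ n := by
          refine mul_le_mul hB0 (pow_le_pow_left₀ (pow_nonneg hc0 B1) hB1 n) ?_ one_pos.le
          positivity
      _ = γ ^ n := one_mul _
  -- rpow facts
  have hgpow_pos : ∀ n : ℕ, (0 : ℝ) < γ ^ n := fun n => pow_pos hγ0 n
  have hgre_nonneg : ∀ n : ℕ, 0 ≤ γ ^ ((n : ℝ) * ε) :=
    fun n => Real.rpow_nonneg hγ0.le _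
  have hgre_le_one : ∀ n : ℕ, γ ^ ((n : ℝ) * ε) ≤ 1 :=
    fun n => Real.rpow_le_one hγ0.le hγ1.le (by positivity)
  -- the constant K
  set K : ℝ := 2 ^ d * (2 * R * d + 1) ^ d with hKdef
  have hK0 : 0 ≤ K := by positivity
  -- bad sets
  set Sb : ℕ → ℕ → Set (ℕ → Fin m) := fun n ℓ =>
    {x | ν (closedBall (π x) (γ ^ n)) <
      ENNReal.ofReal (γ ^ ((n : ℝ) * ε) * Zword T x ℓ (γ ^ n)) * μ (cylinder x ℓ)} with hSbdef
  set Bad : ℕ → Set (ℕ → Fin m) := fun n => {x | ∃ ℓ, x ∈ Sb n ℓ} with hBaddef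
  -- trivial case ℓ ≥ L n
  have htriv : ∀ (n : ℕ) (x : ℕ → Fin m) (ℓ : ℕ), L n ≤ ℓ → x ∉ Sb n ℓ := by
    intro n x ℓ hℓ hmem
    rw [hSbdef] at hmem
    simp only [Set.mem_setOf_eq] at hmem
    refine absurd hmem (not_lt.mpr ?_)
    have h1 : ENNReal.ofReal (γ ^ ((n : ℝ) * ε) * Zword T x ℓ (γ ^ n)) ≤ 1 := by
      rw [← ENNReal.ofReal_one]
      refine ENNReal.ofReal_le_ofReal ?_
      have hz1 : Zword T x ℓ (γ ^ n) ≤ 1 := Zmat_le_one (hWunit x ℓ) (hgpow_pos n).le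
      have hz0 : 0 ≤ Zword T x ℓ (γ ^ n) := Zmat_nonneg (hWunit x ℓ) (hgpow_pos n).le
      nlinarith [hgre_nonneg n, hgre_le_one n]
    calc ENNReal.ofReal (γ ^ ((n : ℝ) * ε) * Zword T x ℓ (γ ^ n)) * μ (cylinder x ℓ)
        ≤ 1 * μ (cylinder x ℓ) := mul_le_mul_left h1 _
      _ = μ (cylinder x ℓ) := one_mul _
      _ ≤ μ (π ⁻¹' closedBall (π x) (γ ^ n)) := by
          refine measure_mono fun y hy => ?_
          simp only [Set.mem_preimage, Metric.mem_closedBall, dist_eq_norm]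
          refine (hcyl_dist x y ℓ hy).trans ?_
          calc c ^ ℓ * (2 * R) ≤ c ^ L n * (2 * R) := by
                refine mul_le_mul_of_nonneg_right ?_ (by positivity)
                exact pow_le_pow_of_le_one hc0 hc_lt.le hℓ
            _ = 2 * R * c ^ L n := by ring
            _ ≤ γ ^ n := hL n
      _ = ν (closedBall (π x) (γ ^ n)) := (hν _ _).symm
  -- main estimate for fixed n, ℓ
  have hmain : ∀ n ℓ : ℕ, μ (Sb n ℓ) ≤ ENNReal.ofReal (γ ^ ((n : ℝ) * ε) * K) := by
    intro n ℓ
    have hcover : Sb n ℓ ⊆ ⋃ I : Fin ℓ → Fin m, Sb n ℓ ∩ cylSet I := by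
      intro x hx
      have : x ∈ ⋃ I : Fin ℓ → Fin m, cylSet I := by rw [iUnion_cylSet]; trivial
      obtain ⟨s, ⟨I, rfl⟩, hxI⟩ := this
      exact Set.mem_iUnion.mpr ⟨I, hx, hxI⟩
    have hstep : ∀ I : Fin ℓ → Fin m, μ (Sb n ℓ ∩ cylSet I)
        ≤ ENNReal.ofReal (γ ^ ((n : ℝ) * ε) * K) * μ (cylSet I) := by
      intro I
      rcases Set.eq_empty_or_nonempty (Sb n ℓ ∩ cylSet I) with hemp | hne
      · rw [hemp]; simp
      obtain ⟨x₀, hx₀S, hx₀c⟩ := hne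
      set W : Matrix (Fin d) (Fin d) ℝ := wordProd T x₀ ℓ with hWdef
      have hrpos : (0 : ℝ) < γ ^ n / 2 := by positivity
      obtain ⟨P, hPcard, hPcov⟩ :=
        covering (hWunit x₀ ℓ) hrpos hR0 (by omega : 0 < d) (pMap T a x₀ ℓ)
      have hPZ : (P.card : ℝ) * Zmat W (γ ^ n) ≤ K := by
        have h2 := Zmat_le_two_pow (hWunit x₀ ℓ) (hgpow_pos n).le
        have hcard0 : (0 : ℝ) ≤ P.card := Nat.cast_nonneg _
        calc (P.card : ℝ) * Zmat W (γ ^ n)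
            ≤ (P.card : ℝ) * (2 ^ d * Zmat W (γ ^ n / 2)) :=
              mul_le_mul_of_nonneg_left h2 hcard0
          _ = 2 ^ d * ((P.card : ℝ) * Zmat W (γ ^ n / 2)) := by ring
          _ ≤ 2 ^ d * (2 * R * d + 1) ^ d := by
              refine mul_le_mul_of_nonneg_left hPcard (by positivity)
          _ = K := by rw [hKdef]
      -- each point of the cylinder is within γ^n/2 of P
      have hπmem : ∀ x ∈ cylSet I, ∃ p ∈ P, ‖π x - p‖ ≤ γ ^ n / 2 := by
        intro x hx
        have hagree : ∀ k < ℓ, x k = x₀ k := cylSet_agree hx₀c hx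
        have hshift := codingMap_shift T a hc0 hc_lt hc_i hA_i x ℓ
        have hWx : wordProd T x ℓ = W := wordProd_congr T hagree
        have hpx : pMap T a x ℓ = pMap T a x₀ ℓ := pMap_congr T a hagree
        obtain ⟨p, hpP, hp⟩ := hPcov (codingMap T a (fun k => x (k + ℓ))) (hπnorm _)
        refine ⟨p, hpP, ?_⟩
        have : π x - p = pMap T a x₀ ℓ
            + mCLM W (codingMap T a (fun k => x (k + ℓ))) - p := by
          rw [hπdef]
          rw [hshift, hWx, hpx]
          abel
        rw [this]
        exact hp
      -- subadditivity over the net P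
      have hsub : Sb n ℓ ∩ cylSet I ⊆
          ⋃ p ∈ P, (Sb n ℓ ∩ cylSet I ∩ π ⁻¹' closedBall p (γ ^ n / 2)) := by
        intro x hx
        obtain ⟨p, hpP, hp⟩ := hπmem x hx.2
        refine Set.mem_biUnion hpP ⟨hx, ?_⟩
        simp only [Set.mem_preimage, Metric.mem_closedBall, dist_eq_norm]
        exact hp
      have hterm : ∀ p ∈ P, μ (Sb n ℓ ∩ cylSet I ∩ π ⁻¹' closedBall p (γ ^ n / 2))
          ≤ ENNReal.ofReal (γ ^ ((n : ℝ) * ε) * Zmat W (γ ^ n)) * μ (cylSet I) := by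
        intro p _
        rcases Set.eq_empty_or_nonempty
          (Sb n ℓ ∩ cylSet I ∩ π ⁻¹' closedBall p (γ ^ n / 2)) with hemp | hne2
        · rw [hemp]; simp
        obtain ⟨xp, ⟨hxpS, hxpc⟩, hxpB⟩ := hne2
        have hsubset : Sb n ℓ ∩ cylSet I ∩ π ⁻¹' closedBall p (γ ^ n / 2)
            ⊆ π ⁻¹' closedBall (π xp) (γ ^ n) := by
          intro z hz
          simp only [Set.mem_preimage, Metric.mem_closedBall] at hz hxpB ⊢
          calc dist (π z) (π xp) ≤ dist (π z) p + dist p (π xp) := dist_triangle _ _ _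
            _ ≤ γ ^ n / 2 + γ ^ n / 2 := by
                refine add_le_add hz.2 ?_
                rw [dist_comm]
                exact hxpB
            _ = γ ^ n := by ring
        have hxpbad : ν (closedBall (π xp) (γ ^ n)) <
            ENNReal.ofReal (γ ^ ((n : ℝ) * ε) * Zword T xp ℓ (γ ^ n)) * μ (cylinder xp ℓ) :=
          hxpS
        have hZxp : Zword T xp ℓ (γ ^ n) = Zmat W (γ ^ n) := by
          have : wordProd T xp ℓ = W := wordProd_congr T (cylSet_agree hx₀c hxpc)
          rw [Zword, this]
        have hcylxp : cylinder xp ℓ = cylSet I := cylinder_eq_cylSet hxpc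
        calc μ (Sb n ℓ ∩ cylSet I ∩ π ⁻¹' closedBall p (γ ^ n / 2))
            ≤ μ (π ⁻¹' closedBall (π xp) (γ ^ n)) := measure_mono hsubset
          _ = ν (closedBall (π xp) (γ ^ n)) := (hν _ _).symm
          _ ≤ ENNReal.ofReal (γ ^ ((n : ℝ) * ε) * Zword T xp ℓ (γ ^ n)) * μ (cylinder xp ℓ) :=
              hxpbad.le
          _ = ENNReal.ofReal (γ ^ ((n : ℝ) * ε) * Zmat W (γ ^ n)) * μ (cylSet I) := by
              rw [hZxp, hcylxp]
      calc μ (Sb n ℓ ∩ cylSet I)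
          ≤ ∑ p ∈ P, μ (Sb n ℓ ∩ cylSet I ∩ π ⁻¹' closedBall p (γ ^ n / 2)) :=
            (measure_mono hsub).trans (measure_biUnion_finset_le _ _)
        _ ≤ ∑ _p ∈ P, ENNReal.ofReal (γ ^ ((n : ℝ) * ε) * Zmat W (γ ^ n)) * μ (cylSet I) :=
            Finset.sum_le_sum hterm
        _ = (P.card : ℝ≥0∞) * (ENNReal.ofReal (γ ^ ((n : ℝ) * ε) * Zmat W (γ ^ n))
              * μ (cylSet I)) := by
            rw [Finset.sum_const, nsmul_eq_mul]
        _ ≤ ENNReal.ofReal (γ ^ ((n : ℝ) * ε) * K) * μ (cylSet I) := by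
            rw [← mul_assoc]
            refine mul_le_mul_left ?_ _
            rw [← ENNReal.ofReal_natCast P.card, ← ENNReal.ofReal_mul (Nat.cast_nonneg _)]
            refine ENNReal.ofReal_le_ofReal ?_
            have hZnn : 0 ≤ Zmat W (γ ^ n) := Zmat_nonneg (hWunit x₀ ℓ) (hgpow_pos n).le
            calc (P.card : ℝ) * (γ ^ ((n : ℝ) * ε) * Zmat W (γ ^ n))
                = γ ^ ((n : ℝ) * ε) * ((P.card : ℝ) * Zmat W (γ ^ n)) := by ring
              _ ≤ γ ^ ((n : ℝ) * ε) * K :=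
                  mul_le_mul_of_nonneg_left hPZ (hgre_nonneg n)
    calc μ (Sb n ℓ) ≤ μ (⋃ I : Fin ℓ → Fin m, Sb n ℓ ∩ cylSet I) := measure_mono hcover
      _ ≤ ∑' I : Fin ℓ → Fin m, μ (Sb n ℓ ∩ cylSet I) := measure_iUnion_le _
      _ = ∑ I : Fin ℓ → Fin m, μ (Sb n ℓ ∩ cylSet I) := tsum_fintype _
      _ ≤ ∑ I : Fin ℓ → Fin m, ENNReal.ofReal (γ ^ ((n : ℝ) * ε) * K) * μ (cylSet I) :=
          Finset.sum_le_sum fun I _ => hstep I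
      _ = ENNReal.ofReal (γ ^ ((n : ℝ) * ε) * K) * ∑ I : Fin ℓ → Fin m, μ (cylSet I) := by
          rw [Finset.mul_sum]
      _ = ENNReal.ofReal (γ ^ ((n : ℝ) * ε) * K) := by
          rw [sum_measure_cylSet μ ℓ, mul_one]
  -- bound on bad sets
  have hBadBound : ∀ n, μ (Bad n) ≤ (L n : ℝ≥0∞) * ENNReal.ofReal (γ ^ ((n : ℝ) * ε) * K) := by
    intro n
    have hBsub : Bad n ⊆ ⋃ ℓ ∈ Finset.range (L n), Sb n ℓ := by
      intro x hx
      obtain ⟨ℓ, hℓ⟩ := hx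
      have hlt : ℓ < L n := by
        by_contra hge
        exact htriv n x ℓ (not_lt.mp hge) hℓ
      exact Set.mem_biUnion (Finset.mem_range.mpr hlt) hℓ
    calc μ (Bad n) ≤ ∑ ℓ ∈ Finset.range (L n), μ (Sb n ℓ) :=
          (measure_mono hBsub).trans (measure_biUnion_finset_le _ _)
      _ ≤ ∑ _ℓ ∈ Finset.range (L n), ENNReal.ofReal (γ ^ ((n : ℝ) * ε) * K) :=
          Finset.sum_le_sum fun ℓ _ => hmain n ℓ
      _ = (L n : ℝ≥0∞) * ENNReal.ofReal (γ ^ ((n : ℝ) * ε) * K) := by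
          rw [Finset.sum_const, Finset.card_range, nsmul_eq_mul]
  -- summability
  have hq : ∀ n : ℕ, γ ^ ((n : ℝ) * ε) = (γ ^ ε) ^ n := by
    intro n
    rw [mul_comm, Real.rpow_mul hγ0.le, Real.rpow_natCast]
  have hq0 : 0 ≤ γ ^ ε := Real.rpow_nonneg hγ0.le ε
  have hq1 : γ ^ ε < 1 := Real.rpow_lt_one hγ0.le hγ1 hε
  set f : ℕ → ℝ := fun n => (L n : ℝ) * ((γ ^ ε) ^ n * K) with hfdef
  have hf0 : ∀ n, 0 ≤ f n := by
    intro n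
    rw [hfdef]
    positivity
  have hfsummable : Summable f := by
    have h1 : Summable (fun n : ℕ => (B0 : ℝ) * (γ ^ ε) ^ n) :=
      (summable_geometric_of_lt_one hq0 hq1).mul_left _
    have h2 : Summable (fun n : ℕ => (B1 : ℝ) * (n * (γ ^ ε) ^ n)) := by
      have := summable_pow_mul_geometric_of_norm_lt_one 1 (by
        rw [Real.norm_eq_abs, abs_of_nonneg hq0]; exact hq1)
      simpa only [pow_one] using this.mul_left (B1 : ℝ)
    have h3 := (h1.add h2).mul_right K
    refine h3.congr fun n => ?_
    rw [hfdef, hLdef]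
    push_cast
    ring
  have hsum : (∑' n, μ (Bad n)) ≠ ⊤ := by
    have hle : ∀ n, μ (Bad n) ≤ ENNReal.ofReal (f n) := by
      intro n
      refine (hBadBound n).trans ?_
      rw [hfdef]
      simp only
      rw [hq n, ← ENNReal.ofReal_natCast (L n),
        ← ENNReal.ofReal_mul (Nat.cast_nonneg _)]
    refine ne_top_of_le_ne_top ?_ (ENNReal.tsum_le_tsum hle)
    rw [← ENNReal.ofReal_tsum_of_nonneg hf0 hfsummable]
    exact ENNReal.ofReal_ne_top
  -- Borel-Cantelli
  have hae := MeasureTheory.ae_eventually_notMem hsum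
  filter_upwards [hae] with x hx
  rw [Filter.eventually_atTop] at hx
  obtain ⟨N, hN⟩ := hx
  refine ⟨N, fun n hn ℓ => ?_⟩
  have hnot : x ∉ Bad n := hN n hn
  rw [hBaddef] at hnot
  simp only [Set.mem_setOf_eq, not_exists] at hnot
  have := hnot ℓ
  rw [hSbdef] at this
  simp only [Set.mem_setOf_eq, not_lt] at this
  exact this

end SelfAffineProj
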